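/- Let M be a maximal subalgebra of a finite-dimensional solvable Lie algebra L. Then the core of N_i(M) in L is contained in N_i(L) for every i ≥ 0, where the core U_L of a subalgebra U is the largest ideal of L contained in U. -/

import Mathlib

/-- The canonical quotient map `L → L ⧸ I` as a morphism of Lie algebras. -/
def lieQuotMk {F L : Type*} [Field F] [LieRing L] [LieAlgebra F L] (I : LieIdeal F L) :
    L →ₗ⁅F⁆ L ⧸ I where
  toLinearMap := (LieSubmodule.Quotient.mk' I).toLinearMap
  map_lie' := rfl

variable (F : Type*) [Field F]

/-- The nilradical: the largest nilpotent ideal of a (finite-dimensional) Lie algebra. -/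
noncomputable def nilrad (L : Type*) [LieRing L] [LieAlgebra F L] : LieIdeal F L :=
  sSup {I : LieIdeal F L | LieModule.IsNilpotent I I}

/-- The upper nilpotent series: `N 0 = 0`, `N (i+1) / N i = nilradical of L ⧸ N i`. -/
noncomputable def upperNil (L : Type*) [LieRing L] [LieAlgebra F L] : ℕ → LieIdeal F L
  | 0 => ⊥
  | n + 1 => LieIdeal.comap (lieQuotMk (upperNil L n)) (nilrad F (L ⧸ upperNil L n))

/-- The nilpotent length: the least `n` with `N n = L`. -/
noncomputable def nilLen (L : Type*) [LieRing L] [LieAlgebra F L] : ℕ :=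
  sInf {n : ℕ | upperNil F L n = ⊤}

/-- The nilpotent residual `γ∞(L)`: the smallest ideal with nilpotent quotient. -/
noncomputable def nilResidual (L : Type*) [LieRing L] [LieAlgebra F L] : LieIdeal F L :=
  sInf {I : LieIdeal F L | LieModule.IsNilpotent (L ⧸ I) (L ⧸ I)}

/-- The lower nilpotent series: `Γ 0 = L`, `Γ (i+1) = γ∞(Γ i)`, viewed as subalgebras of `L`. -/
noncomputable def lowerNil (L : Type*) [LieRing L] [LieAlgebra F L] : ℕ → LieSubalgebra F L
  | 0 => ⊤
  | n + 1 =>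
      LieSubalgebra.map (lowerNil L n).incl
        (LieIdeal.toLieSubalgebra F (lowerNil L n) (nilResidual F (lowerNil L n)))

/-- `M` is a maximal (proper) subalgebra of `L`. -/
def IsMaxSub {L : Type*} [LieRing L] [LieAlgebra F L] (M : LieSubalgebra F L) : Prop :=
  M ≠ ⊤ ∧ ∀ K : LieSubalgebra F L, M < K → K = ⊤

/-- The Frattini subalgebra: the intersection of all maximal subalgebras. -/
noncomputable def lieFrattini (L : Type*) [LieRing L] [LieAlgebra F L] : LieSubalgebra F L :=
  sInf {M : LieSubalgebra F L | IsMaxSub F M}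

/-- The core of a subalgebra `U`: the largest ideal of `L` contained in `U`. -/
noncomputable def lieCore {L : Type*} [LieRing L] [LieAlgebra F L] (U : LieSubalgebra F L) :
    LieIdeal F L :=
  sSup {I : LieIdeal F L | (I : Set L) ⊆ (U : Set L)}

/-- `A` is a minimal ideal of `L`. -/
def IsMinIdeal {L : Type*} [LieRing L] [LieAlgebra F L] (A : LieIdeal F L) : Prop :=
  A ≠ ⊥ ∧ ∀ B : LieIdeal F L, B < A → B = ⊥

/-- The Frattini series: `φ i (L) / N (i-1) (L) = φ(L ⧸ N (i-1) (L))` for `i ≥ 1`. -/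
noncomputable def fratSeries (L : Type*) [LieRing L] [LieAlgebra F L] (i : ℕ) :
    LieSubalgebra F L :=
  LieSubalgebra.comap (lieQuotMk (upperNil F L (i - 1)))
    (lieFrattini F (L ⧸ upperNil F L (i - 1)))

/-- `L` is extreme: `N i (L) / φ i (L)` is a chief factor of `L` for each `1 ≤ i ≤ n(L)`. -/
def IsExtremeLie (L : Type*) [LieRing L] [LieAlgebra F L] : Prop :=
  ∀ i, 1 ≤ i → i ≤ nilLen F L →
    (fratSeries F L i : Set L) ⊆ (upperNil F L i : Set L) ∧
    (fratSeries F L i : Set L) ≠ (upperNil F L i : Set L) ∧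
    ∀ C : LieIdeal F L, (fratSeries F L i : Set L) ⊆ (C : Set L) → C ≤ upperNil F L i →
      (C : Set L) = (fratSeries F L i : Set L) ∨ C = upperNil F L i

/-- `L` is supersolvable: it has a chain of ideals with one-dimensional quotients. -/
def IsSupersolvable (L : Type*) [LieRing L] [LieAlgebra F L] : Prop :=
  ∃ (n : ℕ) (C : ℕ → LieIdeal F L), C 0 = ⊥ ∧ C n = ⊤ ∧
    ∀ i < n, C i ≤ C (i + 1) ∧
      Module.finrank F (C (i + 1)) = Module.finrank F (C i) + 1

/-- A minimal ideal `A` is complemented if some maximal subalgebra `M` satisfies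
`L = A + M` and `A ∩ M = 0`. -/
def IsComplementedIdeal {L : Type*} [LieRing L] [LieAlgebra F L] (A : LieIdeal F L) : Prop :=
  ∃ M : LieSubalgebra F L, IsMaxSub F M ∧
    A.toSubmodule ⊔ M.toSubmodule = ⊤ ∧ A.toSubmodule ⊓ M.toSubmodule = ⊥
section Helpers

open LieModule (lowerCentralSeries)

variable {F}
variable {A B : Type*} [LieRing A] [LieAlgebra F A] [LieRing B] [LieAlgebra F B]

/-- The lower central series of an ideal, as ideals of the ambient algebra. -/
def idlcs (I : LieIdeal F A) : ℕ → LieIdeal F A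
  | 0 => I
  | k + 1 => ⁅I, idlcs I k⁆

@[simp] lemma idlcs_zero (I : LieIdeal F A) : idlcs I 0 = I := rfl

lemma idlcs_succ (I : LieIdeal F A) (k : ℕ) : idlcs I (k + 1) = ⁅I, idlcs I k⁆ := rfl

lemma idlcs_succ_le (I : LieIdeal F A) (k : ℕ) : idlcs I (k + 1) ≤ idlcs I k :=
  LieSubmodule.lie_le_right _ _

lemma idlcs_antitone (I : LieIdeal F A) : Antitone (idlcs I) :=
  antitone_nat_of_succ_le (idlcs_succ_le I)

lemma idlcs_le_self (I : LieIdeal F A) (k : ℕ) : idlcs I k ≤ I := by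
  simpa using idlcs_antitone I (Nat.zero_le k)

lemma coe_idlcs_eq (I : LieIdeal F A) (k : ℕ) :
    (idlcs I k).toSubmodule =
      Submodule.map (LieSubmodule.toSubmodule I).subtype
        (lowerCentralSeries F I I k).toSubmodule := by
  induction k with
  | zero =>
    simp only [LieModule.lowerCentralSeries_zero, LieSubmodule.top_toSubmodule,
      Submodule.map_top]
    exact (Submodule.range_subtype (LieSubmodule.toSubmodule I)).symm
  | succ k ih =>
    apply le_antisymm
    · rw [idlcs_succ, LieSubmodule.lieIdeal_oper_eq_linear_span', Submodule.span_le]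
      rintro m ⟨x, hx, n, hn, rfl⟩
      rw [← LieSubmodule.mem_toSubmodule, ih] at hn
      obtain ⟨n', hn', rfl⟩ := hn
      refine Submodule.mem_map.mpr ⟨⁅(⟨x, hx⟩ : I), n'⁆, ?_, rfl⟩
      rw [LieSubmodule.mem_toSubmodule, LieModule.lowerCentralSeries_succ]
      exact LieSubmodule.lie_mem_lie (LieSubmodule.mem_top _) hn'
    · rw [LieModule.lowerCentralSeries_succ, LieSubmodule.lieIdeal_oper_eq_linear_span',
        Submodule.map_span, Submodule.span_le]
      rintro m ⟨y, ⟨x, hx, n, hn, rfl⟩, rfl⟩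
      show ((⁅x, n⁆ : I) : A) ∈ (idlcs I (k+1)).toSubmodule
      rw [LieSubmodule.mem_toSubmodule, idlcs_succ]
      refine LieSubmodule.lie_mem_lie x.2 ?_
      rw [← LieSubmodule.mem_toSubmodule, ih]
      exact Submodule.mem_map.mpr ⟨n, hn, rfl⟩

lemma isNilpotent_iff_idlcs (I : LieIdeal F A) :
    LieModule.IsNilpotent I I ↔ ∃ k, idlcs I k = ⊥ := by
  constructor
  · rintro h
    obtain ⟨k, hk⟩ := (LieModule.isNilpotent_iff F _ _).mp h
    refine ⟨k, ?_⟩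
    rw [← LieSubmodule.toSubmodule_inj, coe_idlcs_eq, hk]
    simp
  · rintro ⟨k, hk⟩
    refine (LieModule.isNilpotent_iff F _ _).mpr ⟨k, ?_⟩
    rw [eq_bot_iff]
    intro x hx
    have : (x : A) ∈ (idlcs I k).toSubmodule := by
      rw [coe_idlcs_eq]
      exact Submodule.mem_map.mpr ⟨x, hx, rfl⟩
    rw [hk] at this
    simp only [LieSubmodule.bot_toSubmodule, Submodule.mem_bot] at this
    simpa using Subtype.ext this


/-- Inclusion of a Lie ideal (as algebra) into a ideal containing it as a set. -/
def idealHomOfSubsetIdeal {I : LieIdeal F A} {N : LieIdeal F A}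
    (h : (I : Set A) ⊆ (N : Set A)) : I →ₗ⁅F⁆ N where
  toFun x := ⟨x.1, h x.2⟩
  map_add' _ _ := rfl
  map_smul' _ _ := rfl
  map_lie' := rfl

/-- Inclusion of a Lie subalgebra into an ideal containing it as a set. -/
def subalgHomOfSubsetIdeal {K : LieSubalgebra F A} {N : LieIdeal F A}
    (h : (K : Set A) ⊆ (N : Set A)) : K →ₗ⁅F⁆ N where
  toFun x := ⟨x.1, h x.2⟩
  map_add' _ _ := rfl
  map_smul' _ _ := rfl
  map_lie' := rfl

/-- Inclusion of a Lie ideal (as algebra) into a subalgebra containing it as a set. -/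
def idealHomOfSubsetSubalg {I : LieIdeal F A} {K : LieSubalgebra F A}
    (h : (I : Set A) ⊆ (K : Set A)) : I →ₗ⁅F⁆ K where
  toFun x := ⟨x.1, h x.2⟩
  map_add' _ _ := rfl
  map_smul' _ _ := rfl
  map_lie' := rfl

lemma subalg_isNilpotent_of_subset_ideal {K : LieSubalgebra F A} {N : LieIdeal F A}
    (hN : LieModule.IsNilpotent N N) (h : (K : Set A) ⊆ (N : Set A)) :
    LieModule.IsNilpotent K K :=
  haveI := hN
  Function.Injective.lieAlgebra_isNilpotent (f := subalgHomOfSubsetIdeal h)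
    (fun x y hxy => by
      have h2 := congrArg Subtype.val hxy
      exact Subtype.ext h2)

lemma ideal_isNilpotent_of_subset_subalg {I : LieIdeal F A} {K : LieSubalgebra F A}
    (hK : LieModule.IsNilpotent K K) (h : (I : Set A) ⊆ (K : Set A)) :
    LieModule.IsNilpotent I I :=
  haveI := hK
  Function.Injective.lieAlgebra_isNilpotent (f := idealHomOfSubsetSubalg h)
    (fun x y hxy => by
      have h2 := congrArg Subtype.val hxy
      exact Subtype.ext h2)

lemma exists_idlcs_apply_eq_zero {C : LieIdeal F A} (g : C →ₗ⁅F⁆ B)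
    (hg : LieModule.IsNilpotent g.range g.range) :
    ∃ k, ∀ x : C, (x : A) ∈ idlcs C k → g x = 0 := by
  obtain ⟨k, hk⟩ := (LieModule.isNilpotent_iff F _ _).mp hg
  refine ⟨k, fun x hx => ?_⟩
  have hx' : x ∈ lowerCentralSeries F C C k := by
    rw [← LieSubmodule.mem_toSubmodule, coe_idlcs_eq] at hx
    obtain ⟨y, hy, hyx⟩ := hx
    have hyx' : y = x := Subtype.ext hyx
    rw [← hyx']
    simpa using hy
  have hmem : g.rangeRestrict x ∈ LieIdeal.map g.rangeRestrict
      (lowerCentralSeries F C C k) := LieIdeal.mem_map hx'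
  have hle := LieIdeal.map_lowerCentralSeries_le (f := g.rangeRestrict) k
  rw [hk] at hle
  have h0 : g.rangeRestrict x = 0 := by
    have := hle hmem
    simpa using this
  have : ((g.rangeRestrict x : g.range) : B) = g x := rfl
  rw [← this, h0]
  rfl

lemma range_isNilpotent_of_idlcs {C : LieIdeal F A} (g : C →ₗ⁅F⁆ B) (k : ℕ)
    (h : ∀ x : C, (x : A) ∈ idlcs C k → g x = 0) :
    LieModule.IsNilpotent g.range g.range := by
  refine (LieModule.isNilpotent_iff F _ _).mpr ⟨k, ?_⟩
  rw [← LieIdeal.lowerCentralSeries_map_eq k g.surjective_rangeRestrict,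
    LieIdeal.map_eq_bot_iff]
  intro x hx
  have hx' : (x : A) ∈ idlcs C k := by
    rw [← LieSubmodule.mem_toSubmodule, coe_idlcs_eq]
    exact Submodule.mem_map.mpr ⟨x, hx, rfl⟩
  rw [LieHom.mem_ker]
  exact Subtype.ext (h x hx')

lemma lie_finset_sup (I : LieIdeal F A) (s : Finset ℕ) (f : ℕ → LieIdeal F A) :
    ⁅I, s.sup f⁆ ≤ s.sup fun p => ⁅I, f p⁆ := by
  induction s using Finset.cons_induction with
  | empty => simp [LieSubmodule.lie_bot]
  | cons a s ha ih =>
    rw [Finset.sup_cons, Finset.sup_cons, LieSubmodule.lie_sup]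
    exact sup_le_sup le_rfl ih

/-- `gpow I p` is `I^(p)` with the convention `gpow I 0 = ⊤`. -/
def gpow (I : LieIdeal F A) : ℕ → LieIdeal F A
  | 0 => ⊤
  | p + 1 => idlcs I p

lemma lie_gpow_self (I : LieIdeal F A) (p : ℕ) : ⁅I, gpow I p⁆ ≤ gpow I (p + 1) := by
  cases p with
  | zero => exact LieSubmodule.lie_le_left _ _
  | succ p => exact le_of_eq rfl

lemma lie_gpow_other (J I : LieIdeal F A) (p : ℕ) : ⁅J, gpow I p⁆ ≤ gpow I p := by
  cases p with
  | zero => exact le_top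
  | succ p => exact LieSubmodule.lie_le_right _ _

lemma idlcs_sup_le (I J : LieIdeal F A) (n : ℕ) :
    idlcs (I ⊔ J) n ≤ (Finset.range (n + 1)).sup fun p => gpow I p ⊓ gpow J (n - p) := by
  induction n with
  | zero =>
    refine le_trans ?_ (Finset.le_sup (Finset.self_mem_range_succ 0))
    simp [gpow]
  | succ n ih =>
    have hterm : ∀ K : LieIdeal F A, ∀ p,
        ⁅K, gpow I p ⊓ gpow J (n - p)⁆ ≤ ⁅K, gpow I p⁆ ⊓ ⁅K, gpow J (n - p)⁆ :=
      fun K p => le_inf (LieSubmodule.mono_lie_right _ inf_le_left)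
        (LieSubmodule.mono_lie_right _ inf_le_right)
    rw [idlcs_succ, LieSubmodule.sup_lie]
    apply sup_le
    · refine le_trans (LieSubmodule.mono_lie_right _ ih) ?_
      refine le_trans (lie_finset_sup _ _ _) ?_
      apply Finset.sup_le
      intro p hp
      rw [Finset.mem_range, Nat.lt_succ_iff] at hp
      refine le_trans (hterm I p) ?_
      refine le_trans (inf_le_inf (lie_gpow_self I p) (lie_gpow_other I J (n - p))) ?_
      refine le_trans ?_ (Finset.le_sup (f := fun p => gpow I p ⊓ gpow J (n + 1 - p))
        (Finset.mem_range.mpr (by omega : p + 1 < n + 2)))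
      have heq : n + 1 - (p + 1) = n - p := by omega
      simp only [heq]
      exact le_rfl
    · refine le_trans (LieSubmodule.mono_lie_right _ ih) ?_
      refine le_trans (lie_finset_sup _ _ _) ?_
      apply Finset.sup_le
      intro p hp
      rw [Finset.mem_range, Nat.lt_succ_iff] at hp
      refine le_trans (hterm J p) ?_
      refine le_trans (inf_le_inf (lie_gpow_other J I p) (lie_gpow_self J (n - p))) ?_
      refine le_trans ?_ (Finset.le_sup (f := fun p => gpow I p ⊓ gpow J (n + 1 - p))
        (Finset.mem_range.mpr (by omega : p < n + 2)))
      have heq : n + 1 - p = n - p + 1 := by omega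
      simp only [heq]
      exact le_rfl

lemma gpow_antitone (I : LieIdeal F A) : Antitone (gpow I) := by
  apply antitone_nat_of_succ_le
  intro p
  cases p with
  | zero => exact le_top
  | succ p => exact idlcs_succ_le I p

lemma isNilpotent_sup {I J : LieIdeal F A} (hI : LieModule.IsNilpotent I I)
    (hJ : LieModule.IsNilpotent J J) : LieModule.IsNilpotent ↥(I ⊔ J) ↥(I ⊔ J) := by
  rw [isNilpotent_iff_idlcs] at hI hJ ⊢
  obtain ⟨a, ha⟩ := hI
  obtain ⟨b, hb⟩ := hJ
  refine ⟨a + b + 2, le_bot_iff.mp ?_⟩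
  refine le_trans (idlcs_sup_le I J (a + b + 2)) ?_
  apply Finset.sup_le
  intro p hp
  rw [Finset.mem_range, Nat.lt_succ_iff] at hp
  rcases le_or_gt p a with h | h
  · refine le_trans inf_le_right ?_
    calc gpow J (a + b + 2 - p) ≤ gpow J (b + 1) := gpow_antitone J (by omega)
      _ = idlcs J b := rfl
      _ = ⊥ := hb
  · refine le_trans inf_le_left ?_
    calc gpow I p ≤ gpow I (a + 1) := gpow_antitone I (by omega)
      _ = idlcs I a := rfl
      _ = ⊥ := ha

lemma nilrad_isNilpotent' (hwf : WellFoundedGT (LieIdeal F A)) :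
    LieModule.IsNilpotent ↥(sSup {I : LieIdeal F A | LieModule.IsNilpotent I I}) ↥(sSup {I : LieIdeal F A | LieModule.IsNilpotent I I}) := by
  rw [← CompleteLattice.isSupClosedCompact_iff_wellFoundedGT] at hwf
  refine hwf {I : LieIdeal F A | LieModule.IsNilpotent I I} ⟨⊥, ?_⟩ fun I hI J hJ => ?_
  · exact (isNilpotent_iff_idlcs (⊥ : LieIdeal F A)).mpr ⟨0, rfl⟩
  · exact isNilpotent_sup hI hJ

end Helpers


lemma upperNil_zero {F} [Field F] (K : Type*) [LieRing K] [LieAlgebra F K] :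
    upperNil F K 0 = ⊥ := rfl

lemma upperNil_succ {F} [Field F] (K : Type*) [LieRing K] [LieAlgebra F K] (n : ℕ) :
    upperNil F K (n + 1) =
      LieIdeal.comap (lieQuotMk (upperNil F K n)) (nilrad F (K ⧸ upperNil F K n)) := rfl

lemma nilrad_isNilpotent {F : Type*} [Field F] (A : Type*) [LieRing A] [LieAlgebra F A]
    [FiniteDimensional F A] : LieModule.IsNilpotent ↥(nilrad F A) ↥(nilrad F A) :=
  nilrad_isNilpotent' (LieSubmodule.wellFoundedGT_of_noetherian F A A)

/-- If `M` is a maximal subalgebra of `L` then the core of `N i (M)` in `L` is contained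
in `N i (L)` for every `i`. -/
theorem stmt5 {F L : Type*} [Field F] [LieRing L] [LieAlgebra F L]
    [FiniteDimensional F L] [LieAlgebra.IsSolvable L]
    (M : LieSubalgebra F L) (hM : IsMaxSub F M) :
    ∀ i : ℕ,
      lieCore F (LieSubalgebra.map M.incl (LieIdeal.toLieSubalgebra F M (upperNil F M i)))
        ≤ upperNil F L i := by
  haveI : FiniteDimensional F M := FiniteDimensional.of_injective M.incl.toLinearMap
    (fun x y h => Subtype.ext (by exact h))
  intro i
  induction i with
  | zero =>
    apply sSup_le
    rintro C hC
    intro x hx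
    obtain ⟨y, hy, rfl⟩ := hC hx
    have hy0 : y = 0 := by
      have : y ∈ (⊥ : LieIdeal F M) := hy
      simpa using this
    rw [upperNil_zero]
    simp [hy0]
  | succ i ih =>
    apply sSup_le
    rintro C hC
    have hCM : ∀ x : L, x ∈ C → x ∈ M := by
      intro x hx
      obtain ⟨y, hy, rfl⟩ := hC hx
      exact y.2
    have hC' : ∀ x : M, (x : L) ∈ C → x ∈ upperNil F M (i + 1) := by
      intro x hx
      obtain ⟨y, hy, heq⟩ := hC hx
      have hyx : y = x := Subtype.ext heq
      rw [← hyx]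
      exact hy
    let ι : C →ₗ⁅F⁆ M :=
      { toFun := fun x => ⟨x.1, hCM x.1 x.2⟩
        map_add' := fun _ _ => rfl
        map_smul' := fun _ _ => rfl
        map_lie' := rfl }
    let g : C →ₗ⁅F⁆ (M ⧸ upperNil F M i) := (lieQuotMk (upperNil F M i)).comp ι
    have hrange : LieModule.IsNilpotent g.range g.range := by
      refine subalg_isNilpotent_of_subset_ideal
        (nilrad_isNilpotent (↥M ⧸ upperNil F ↥M i)) ?_
      rintro x ⟨y, rfl⟩
      have h1 : ι y ∈ upperNil F M (i + 1) := hC' (ι y) y.2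
      rw [upperNil_succ] at h1
      exact h1
    obtain ⟨k, hk⟩ := exists_idlcs_apply_eq_zero g hrange
    have hD : idlcs C k ≤ upperNil F L i := by
      refine le_trans (le_sSup ?_) ih
      intro x hx
      have hxC : x ∈ C := idlcs_le_self C k hx
      have h0 := hk ⟨x, hxC⟩ hx
      have h1 : ι ⟨x, hxC⟩ ∈ upperNil F M i := by
        have h2 : LieSubmodule.Quotient.mk' (upperNil F M i) (ι ⟨x, hxC⟩) = 0 := h0
        rwa [LieSubmodule.Quotient.mk_eq_zero] at h2
      exact ⟨ι ⟨x, hxC⟩, h1, rfl⟩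
    set q := lieQuotMk (upperNil F L i) with hqdef
    have hq : Function.Surjective q := LieSubmodule.Quotient.surjective_mk' _
    have hrng2 : LieModule.IsNilpotent (q.comp C.incl).range (q.comp C.incl).range := by
      refine range_isNilpotent_of_idlcs _ k ?_
      intro x hx
      have hmem : (x : L) ∈ upperNil F L i := hD hx
      show LieSubmodule.Quotient.mk' (upperNil F L i) (C.incl x) = 0
      rwa [LieSubmodule.Quotient.mk_eq_zero]
    have hmapnil : LieModule.IsNilpotent ↥(LieIdeal.map q C) ↥(LieIdeal.map q C) := by
      refine ideal_isNilpotent_of_subset_subalg hrng2 ?_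
      intro x hx
      obtain ⟨y, rfl⟩ := LieIdeal.mem_map_of_surjective hq hx
      exact ⟨y, rfl⟩
    have hnr : LieIdeal.map q C ≤ nilrad F (L ⧸ upperNil F L i) := le_sSup hmapnil
    calc C ≤ LieIdeal.comap q (LieIdeal.map q C) := LieIdeal.comap_map_le
      _ ≤ LieIdeal.comap q (nilrad F (L ⧸ upperNil F L i)) := LieIdeal.comap_mono hnr
      _ = upperNil F L (i + 1) := (upperNil_succ L i).symm
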